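/- Let u, U : Ω → ℝ be C² functions on an open set Ω ⊆ ℝ² on which y ≠ 0, satisfying u_x² + U_x² = y², u_x·u_y + U_x·U_y = 0, and u_y² + U_y² = 1 throughout Ω. Then u_yy = 0 and U_yy = 0 on Ω; in particular u and U are affine in the variable y along vertical lines in Ω. -/

import Mathlib

private lemma aux_hfd {Ω : Set (ℝ × ℝ)} (hΩ : IsOpen Ω) {f : ℝ × ℝ → ℝ}
    (hf : ContDiffOn ℝ 2 f Ω) {p : ℝ × ℝ} (hp : p ∈ Ω) (v : ℝ × ℝ) :
    HasFDerivAt (fun q => fderiv ℝ f q v)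
      ((fderiv ℝ (fderiv ℝ f) p).flip v) p := by
  have hmem := hΩ.mem_nhds hp
  have h2 : ContDiffAt ℝ 2 f p := hf.contDiffAt hmem
  have hdu : DifferentiableAt ℝ (fderiv ℝ f) p :=
    (h2.fderiv_right (m := 1) (by norm_num)).differentiableAt one_ne_zero
  have := hdu.hasFDerivAt.clm_apply (hasFDerivAt_const v p)
  simpa using this

private lemma aux_symm {Ω : Set (ℝ × ℝ)} (hΩ : IsOpen Ω) {f : ℝ × ℝ → ℝ}
    (hf : ContDiffOn ℝ 2 f Ω) {p : ℝ × ℝ} (hp : p ∈ Ω) (v w : ℝ × ℝ) :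
    fderiv ℝ (fderiv ℝ f) p v w = fderiv ℝ (fderiv ℝ f) p w v := by
  have hmem := hΩ.mem_nhds hp
  have h2 : ContDiffAt ℝ 2 f p := hf.contDiffAt hmem
  have hdu : DifferentiableAt ℝ (fderiv ℝ f) p :=
    (h2.fderiv_right (m := 1) (by norm_num)).differentiableAt one_ne_zero
  have hev : ∀ᶠ q in nhds p, HasFDerivAt f (fderiv ℝ f q) q := by
    filter_upwards [hmem] with q hq
    exact ((hf.contDiffAt (hΩ.mem_nhds hq)).differentiableAt (by norm_num)).hasFDerivAt
  exact second_derivative_symmetric_of_eventually hev hdu.hasFDerivAt v w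

set_option maxHeartbeats 1000000 in
theorem stmt_2 (Ω : Set (ℝ × ℝ)) (hΩ : IsOpen Ω)
    (u U : ℝ × ℝ → ℝ)
    (hu : ContDiffOn ℝ 2 u Ω) (hU : ContDiffOn ℝ 2 U Ω)
    (hy : ∀ p ∈ Ω, p.2 ≠ 0)
    (h1 : ∀ p ∈ Ω, (fderiv ℝ u p (1, 0)) ^ 2 + (fderiv ℝ U p (1, 0)) ^ 2 = p.2 ^ 2)
    (h2 : ∀ p ∈ Ω, fderiv ℝ u p (1, 0) * fderiv ℝ u p (0, 1)
        + fderiv ℝ U p (1, 0) * fderiv ℝ U p (0, 1) = 0)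
    (h3 : ∀ p ∈ Ω, (fderiv ℝ u p (0, 1)) ^ 2 + (fderiv ℝ U p (0, 1)) ^ 2 = 1) :
    ∀ p ∈ Ω, fderiv ℝ (fun q => fderiv ℝ u q (0, 1)) p (0, 1) = 0 ∧
      fderiv ℝ (fun q => fderiv ℝ U q (0, 1)) p (0, 1) = 0 := by
  intro p hp
  have hmem := hΩ.mem_nhds hp
  have H1 := h1 p hp
  have H2 := h2 p hp
  have H3 := h3 p hp
  set a := fderiv ℝ u p (1, 0) with ha
  set b := fderiv ℝ U p (1, 0) with hb
  set c := fderiv ℝ u p (0, 1) with hc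
  set d := fderiv ℝ U p (0, 1) with hd
  set Du := fderiv ℝ (fderiv ℝ u) p with hDu
  set DU := fderiv ℝ (fderiv ℝ U) p with hDU
  -- derivatives of the coefficient functions
  have hau := aux_hfd hΩ hu hp (1, 0)
  have hcu := aux_hfd hΩ hu hp (0, 1)
  have haU := aux_hfd hΩ hU hp (1, 0)
  have hcU := aux_hfd hΩ hU hp (0, 1)
  -- rewrite goal using HasFDerivAt.fderiv
  have goalu : fderiv ℝ (fun q => fderiv ℝ u q (0, 1)) p = Du.flip (0, 1) := hcu.fderiv
  have goalU : fderiv ℝ (fun q => fderiv ℝ U q (0, 1)) p = DU.flip (0, 1) := hcU.fderiv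
  -- differentiate h3: c² + d² = 1
  have hG3 : HasFDerivAt (fun q => (fderiv ℝ u q (0, 1)) ^ 2 + (fderiv ℝ U q (0, 1)) ^ 2)
      ((2 * c) • (Du.flip (0, 1)) + (2 * d) • (DU.flip (0, 1))) p := by
    have h1' := (hcu.mul hcu).add (hcU.mul hcU)
    have : (fun q => (fderiv ℝ u q (0, 1)) ^ 2 + (fderiv ℝ U q (0, 1)) ^ 2)
        = fun q => fderiv ℝ u q (0, 1) * fderiv ℝ u q (0, 1)
          + fderiv ℝ U q (0, 1) * fderiv ℝ U q (0, 1) := by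
      funext q; ring
    rw [this]
    refine h1'.congr_fderiv ?_
    rw [← hc, ← hd, ← hDu, ← hDU]
    module
  have hG3' : fderiv ℝ (fun q => (fderiv ℝ u q (0, 1)) ^ 2 + (fderiv ℝ U q (0, 1)) ^ 2) p = 0 := by
    have heq : (fun q => (fderiv ℝ u q (0, 1)) ^ 2 + (fderiv ℝ U q (0, 1)) ^ 2)
        =ᶠ[nhds p] fun _ => (1 : ℝ) := by
      filter_upwards [hmem] with q hq using h3 q hq
    rw [heq.fderiv_eq, fderiv_fun_const]
    rfl
  have hE3 : (2 * c) • (Du.flip (0, 1)) + (2 * d) • (DU.flip (0, 1)) = 0 := by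
    rw [← hG3.fderiv, hG3']
  -- evaluate at (0,1) and (1,0)
  have e1 : 2 * c * Du (0, 1) (0, 1) + 2 * d * DU (0, 1) (0, 1) = 0 := by
    have := congrArg (fun (L : (ℝ × ℝ) →L[ℝ] ℝ) => L (0, 1)) hE3
    simpa using this
  have e2 : 2 * c * Du (1, 0) (0, 1) + 2 * d * DU (1, 0) (0, 1) = 0 := by
    have := congrArg (fun (L : (ℝ × ℝ) →L[ℝ] ℝ) => L (1, 0)) hE3
    simpa using this
  -- differentiate h2: a*c + b*d = 0
  have hG2 : HasFDerivAt (fun q => fderiv ℝ u q (1, 0) * fderiv ℝ u q (0, 1)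
      + fderiv ℝ U q (1, 0) * fderiv ℝ U q (0, 1))
      (a • (Du.flip (0, 1)) + c • (Du.flip (1, 0))
        + (b • (DU.flip (0, 1)) + d • (DU.flip (1, 0)))) p :=
    (hau.mul hcu).add (haU.mul hcU)
  have hG2' : fderiv ℝ (fun q => fderiv ℝ u q (1, 0) * fderiv ℝ u q (0, 1)
      + fderiv ℝ U q (1, 0) * fderiv ℝ U q (0, 1)) p = 0 := by
    have heq : (fun q => fderiv ℝ u q (1, 0) * fderiv ℝ u q (0, 1)
        + fderiv ℝ U q (1, 0) * fderiv ℝ U q (0, 1)) =ᶠ[nhds p] fun _ => (0 : ℝ) := by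
      filter_upwards [hmem] with q hq using h2 q hq
    rw [heq.fderiv_eq, fderiv_fun_const]
    rfl
  have hE2 : a • (Du.flip (0, 1)) + c • (Du.flip (1, 0))
      + (b • (DU.flip (0, 1)) + d • (DU.flip (1, 0))) = 0 := by
    rw [← hG2.fderiv, hG2']
  have e3 : a * Du (0, 1) (0, 1) + c * Du (0, 1) (1, 0)
      + (b * DU (0, 1) (0, 1) + d * DU (0, 1) (1, 0)) = 0 := by
    have := congrArg (fun (L : (ℝ × ℝ) →L[ℝ] ℝ) => L (0, 1)) hE2
    simpa using this
  -- symmetry of second derivatives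
  have symu : Du (0, 1) (1, 0) = Du (1, 0) (0, 1) := aux_symm hΩ hu hp _ _
  have symU : DU (0, 1) (1, 0) = DU (1, 0) (0, 1) := aux_symm hΩ hU hp _ _
  -- combine: a * Cu + b * CU = 0 where Cu := Du (0,1) (0,1)
  set Cu := Du (0, 1) (0, 1)
  set CU := DU (0, 1) (0, 1)
  have e4 : a * Cu + b * CU = 0 := by
    rw [symu, symU] at e3
    linarith
  have e5 : c * Cu + d * CU = 0 := by linarith
  -- determinant nonzero
  have hdet : (a * d - b * c) ^ 2 = p.2 ^ 2 := by
    linear_combination (c ^ 2 + d ^ 2) * H1 + p.2 ^ 2 * H3 - (a * c + b * d) * H2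
  have hdet' : a * d - b * c ≠ 0 := by
    intro h
    apply hy p hp
    have h0 : p.2 ^ 2 = 0 := by rw [← hdet, h]; ring
    exact pow_eq_zero_iff two_ne_zero |>.mp h0
  have hCu : Cu = 0 := by
    have hz : (a * d - b * c) * Cu = 0 := by linear_combination d * e4 - b * e5
    exact (mul_eq_zero.mp hz).resolve_left hdet'
  have hCU : CU = 0 := by
    have hz : (a * d - b * c) * CU = 0 := by linear_combination a * e5 - c * e4
    exact (mul_eq_zero.mp hz).resolve_left hdet'
  constructor
  · rw [goalu]; simpa using hCu
  · rw [goalU]; simpa using hCU
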